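/- Let p be a prime number and n ≥ 0 an integer. Let g(S), h(S) ∈ Z_p[[S]] be power series over the p-adic integers satisfying S·g(S) = ((1+S)^{p^n} − 1)·h(S), and suppose the constant term h(0) is divisible by p. If g is not identically zero modulo p (i.e., some coefficient of g is a p-adic unit), then the coefficient of S^i in g(S) is divisible by p for every i < p^n; in other words, the λ-invariant of g satisfies λ(g) ≥ p^n. -/

import Mathlib

open PowerSeries

private theorem padic_dvd_iff_toZMod_eq_zero (p : ℕ) [Fact p.Prime] (x : ℤ_[p]) :
    (p : ℤ_[p]) ∣ x ↔ PadicInt.toZMod x = 0 := by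
  rw [← RingHom.mem_ker, PadicInt.ker_toZMod, PadicInt.maximalIdeal_eq_span_p,
    Ideal.mem_span_singleton]

private instance psCharP (R : Type*) [CommRing R] (p : ℕ) [CharP R p] :
    CharP (PowerSeries R) p :=
  charP_of_injective_ringHom (PowerSeries.C_injective (R := R)) p

/-- Let `g, h ∈ ℤ_p[[S]]` satisfy `S·g(S) = ((1+S)^{pⁿ} − 1)·h(S)` with
`p ∣ h(0)`. If some coefficient of `g` is a `p`-adic unit (i.e. `μ(g) = 0`), then every
coefficient of `g` of index `< pⁿ` is divisible by `p`; that is, `λ(g) ≥ pⁿ`. -/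
theorem lambda_invariant_lower_bound (p : ℕ) [Fact p.Prime] (n : ℕ)
    (g h : PowerSeries ℤ_[p])
    (heq : PowerSeries.X * g = ((1 + PowerSeries.X) ^ (p ^ n) - 1) * h)
    (hh : (p : ℤ_[p]) ∣ PowerSeries.constantCoeff h)
    (hg : ∃ i : ℕ, ¬ (p : ℤ_[p]) ∣ PowerSeries.coeff i g) :
    ∀ i < p ^ n, (p : ℤ_[p]) ∣ PowerSeries.coeff i g := by
  classical
  set φ : PowerSeries ℤ_[p] →+* PowerSeries (ZMod p) :=
    PowerSeries.map (PadicInt.toZMod (p := p)) with hφ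
  have hp : Fact p.Prime := inferInstance
  -- reduce the equation mod p
  have heq' : PowerSeries.X * φ g = PowerSeries.X ^ (p ^ n) * φ h := by
    have := congrArg φ heq
    simp only [map_mul, map_sub, map_pow, map_add, map_one, PowerSeries.map_X, hφ] at this ⊢
    rwa [add_pow_char_pow (R := PowerSeries (ZMod p)), one_pow, add_sub_cancel_left] at this
  -- h mod p is divisible by X
  have hXh : PowerSeries.X ∣ φ h := by
    rw [PowerSeries.X_dvd_iff]
    have : PadicInt.toZMod (PowerSeries.constantCoeff h) = 0 :=
      (padic_dvd_iff_toZMod_eq_zero p _).mp hh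
    rw [← PowerSeries.coeff_zero_eq_constantCoeff_apply, hφ, PowerSeries.coeff_map,
      PowerSeries.coeff_zero_eq_constantCoeff_apply]
    exact this
  obtain ⟨h', hh'⟩ := hXh
  have hpn : 1 ≤ p ^ n := Nat.one_le_pow _ _ hp.out.pos
  have hgX : φ g = PowerSeries.X ^ (p ^ n) * h' := by
    apply mul_left_cancel₀ (PowerSeries.X_ne_zero (R := ZMod p))
    rw [heq', hh']
    ring
  intro i hi
  rw [padic_dvd_iff_toZMod_eq_zero]
  have : (PowerSeries.coeff i) (φ g) = 0 := by
    rw [hgX]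
    exact (PowerSeries.X_pow_dvd_iff.mp ⟨h', rfl⟩) i hi
  simpa [hφ] using this
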